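/- A finite word w is rich if and only if every complete return to any nonempty palindromic factor of w is itself a palindrome, where a complete return to u in w is a factor of w containing exactly two occurrences of u, one as a prefix and one as a suffix. -/

import Mathlib

/-- A word is a palindrome if it equals its reversal. -/
def Palindromic {α : Type*} (w : List α) : Prop := w.reverse = w

/-- A finite word is rich if it has exactly |w|+1 distinct palindromic factors
(including the empty word). -/
def Rich {α : Type*} (w : List α) : Prop :=
  {p : List α | p <:+: w ∧ Palindromic p}.ncard = w.length + 1

/-- A word is square-free if it has no factor of the form `u ++ u` with `u` nonempty. -/
def SqFree {α : Type*} (w : List α) : Prop :=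
  ∀ u : List α, u ≠ [] → ¬ (u ++ u) <:+: w

/-- `r` is a complete return to `u`: it has `u` as a prefix and as a suffix,
and exactly two occurrences of `u` altogether. -/
def CompleteReturn {α : Type*} (u r : List α) : Prop :=
  u <+: r ∧ u <:+ r ∧ {s : List α | ∃ t, r = s ++ u ++ t}.ncard = 2

section Aux

open List

variable {α : Type*}

/-- The set of palindromic factors of `w`. -/
def palSet (w : List α) : Set (List α) := {p : List α | p <:+: w ∧ Palindromic p}

lemma rich_def (w : List α) : Rich w ↔ (palSet w).ncard = w.length + 1 := Iff.rfl

lemma palSet_finite (w : List α) : (palSet w).Finite := by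
  apply Set.Finite.subset (w.tails.flatMap List.inits).finite_toSet
  rintro p ⟨hp, -⟩
  obtain ⟨t, ht1, ht2⟩ := List.infix_iff_prefix_suffix.mp hp
  simp only [Set.mem_setOf_eq, List.mem_flatMap, List.mem_tails, List.mem_inits]
  exact ⟨t, ht2, ht1⟩

lemma palSet_nil : palSet ([] : List α) = {[]} := by
  ext p
  simp [palSet, Palindromic]
  rintro rfl; rfl

lemma IsSuffix.prefix_of_pal {p q : List α} (hqp : Palindromic q) (hpp : Palindromic p)
    (h : q <:+ p) : q <+: p := by
  have := List.reverse_prefix.mpr h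
  rwa [hqp, hpp] at this

/-- Every nonempty word has a longest palindromic suffix, which is nonempty. -/
lemma exists_maxPalSuffix (w : List α) (hw : w ≠ []) :
    ∃ q, q <:+ w ∧ Palindromic q ∧ q ≠ [] ∧
      ∀ p, p <:+ w → Palindromic p → p.length ≤ q.length := by
  obtain ⟨v, a, hw'⟩ := (List.eq_nil_or_concat w).resolve_left hw
  rw [List.concat_eq_append] at hw'
  subst hw'
  have hfin : ({p : List α | p <:+ v ++ [a] ∧ Palindromic p}).Finite := by
    apply Set.Finite.subset ((v ++ [a]).tails).finite_toSet
    rintro p ⟨hp, -⟩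
    simpa only [Set.mem_setOf_eq, List.mem_tails] using hp
  have hne : ({p : List α | p <:+ v ++ [a] ∧ Palindromic p}).Nonempty :=
    ⟨[a], suffix_append v [a], rfl⟩
  obtain ⟨q, ⟨hq1, hq2⟩, hmax⟩ := Set.exists_max_image _ List.length hfin hne
  refine ⟨q, hq1, hq2, ?_, fun p h1 h2 => hmax p ⟨h1, h2⟩⟩
  intro h
  have := hmax [a] ⟨suffix_append v [a], rfl⟩
  simp [h] at this

/-- A palindromic suffix strictly shorter than another palindromic suffix of `v ++ [a]`
occurs already in `v`. -/
lemma shorter_palsuffix_infix {v : List α} {a : α} {p q : List α}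
    (hp : p <:+ v ++ [a]) (hpp : Palindromic p)
    (hq : q <:+ v ++ [a]) (hqp : Palindromic q)
    (hlen : q.length < p.length) : q <:+: v := by
  have hqs : q <:+ p := suffix_of_suffix_length_le hq hp hlen.le
  have hqpre : q <+: p := IsSuffix.prefix_of_pal hqp hpp hqs
  rcases List.eq_nil_or_concat p with rfl | ⟨p', b, hpb⟩
  · simp at hlen
  · rw [List.concat_eq_append] at hpb
    subst hpb
    obtain ⟨s, hs⟩ := hp
    rw [← append_assoc] at hs
    obtain ⟨hv, -⟩ := append_inj' hs rfl
    have hqlen : q.length ≤ p'.length := by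
      simp only [length_append, length_cons, length_nil] at hlen; omega
    have hq' : q <+: p' :=
      prefix_of_prefix_length_le hqpre (prefix_append p' [b]) hqlen
    obtain ⟨t, ht⟩ := hq'
    exact ⟨s, t, by rw [← hv, ← ht, append_assoc]⟩

lemma infix_concat_iff' {p v : List α} {a : α} :
    p <:+: v ++ [a] ↔ p <:+: v ∨ p <:+ v ++ [a] := by
  constructor
  · rintro ⟨s, t, h⟩
    rcases List.eq_nil_or_concat t with rfl | ⟨t', b, htb⟩
    · right; exact ⟨s, by simpa using h⟩
    · rw [List.concat_eq_append] at htb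
      subst htb
      left
      rw [← append_assoc] at h
      obtain ⟨h1, -⟩ := append_inj' h rfl
      exact ⟨s, t', h1⟩
  · rintro (h | h)
    · exact h.trans ⟨[], [a], by simp⟩
    · exact h.isInfix

/-- Adding a letter: the palindromic factors of `v ++ [a]` are those of `v` together
with the longest palindromic suffix of `v ++ [a]`. -/
lemma palSet_concat {v : List α} {a : α} {q : List α}
    (hq : q <:+ v ++ [a]) (hqp : Palindromic q)
    (hmax : ∀ p, p <:+ v ++ [a] → Palindromic p → p.length ≤ q.length) :
    palSet (v ++ [a]) = insert q (palSet v) := by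
  ext p
  constructor
  · rintro ⟨hin, hpal⟩
    rcases infix_concat_iff'.mp hin with h | h
    · exact .inr ⟨h, hpal⟩
    · rcases lt_or_eq_of_le (hmax p h hpal) with hl | hl
      · exact .inr ⟨shorter_palsuffix_infix hq hqp h hpal hl, hpal⟩
      · exact .inl ((suffix_of_suffix_length_le h hq hl.le).eq_of_length hl)
  · rintro (rfl | ⟨hin, hpal⟩)
    · exact ⟨hq.isInfix, hqp⟩
    · exact ⟨hin.trans ⟨[], [a], by simp⟩, hpal⟩

lemma ncard_palSet_concat_le (v : List α) (a : α) :
    (palSet (v ++ [a])).ncard ≤ (palSet v).ncard + 1 := by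
  obtain ⟨q, hq, hqp, -, hmax⟩ := exists_maxPalSuffix (v ++ [a]) (by simp)
  rw [palSet_concat hq hqp hmax]
  exact Set.ncard_insert_le q _

lemma ncard_palSet_append_le (v : List α) : ∀ t : List α,
    (palSet (v ++ t)).ncard ≤ (palSet v).ncard + t.length := by
  intro t
  induction t using List.reverseRecOn with
  | nil => simp
  | append_singleton t a ih =>
    rw [← append_assoc]
    have h1 := ncard_palSet_concat_le (v ++ t) a
    simp only [length_append, length_cons, length_nil]
    omega

lemma ncard_palSet_le (w : List α) : (palSet w).ncard ≤ w.length + 1 := by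
  have := ncard_palSet_append_le [] w
  simp only [nil_append, palSet_nil, Set.ncard_singleton] at this
  omega

lemma palSet_mono {v w : List α} (h : v <:+: w) : palSet v ⊆ palSet w :=
  fun _ hp => ⟨hp.1.trans h, hp.2⟩

lemma Rich.of_prefix {v w : List α} (hw : Rich w) (h : v <+: w) : Rich v := by
  obtain ⟨t, rfl⟩ := h
  rw [rich_def] at *
  have h1 := ncard_palSet_append_le v t
  have h2 := ncard_palSet_le v
  simp only [length_append] at hw
  omega

lemma palSet_reverse (w : List α) : palSet w.reverse = palSet w := by
  ext p
  constructor
  · rintro ⟨h, hp⟩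
    refine ⟨?_, hp⟩
    have : p.reverse <:+: w.reverse := by rwa [hp]
    exact List.reverse_infix.mp this
  · rintro ⟨h, hp⟩
    refine ⟨?_, hp⟩
    have : p.reverse <:+: w.reverse := List.reverse_infix.mpr h
    rwa [hp] at this

lemma Rich.reverse {w : List α} (hw : Rich w) : Rich w.reverse := by
  rw [rich_def] at *
  rwa [palSet_reverse, length_reverse]

lemma Rich.of_suffix {v w : List α} (hw : Rich w) (h : v <:+ w) : Rich v := by
  have h1 : v.reverse <+: w.reverse := List.reverse_prefix.mpr h
  have := (hw.reverse.of_prefix h1).reverse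
  rwa [List.reverse_reverse] at this

lemma Rich.of_infix {v w : List α} (hw : Rich w) (h : v <:+: w) : Rich v := by
  obtain ⟨s, t, rfl⟩ := h
  have h1 : v ++ t <:+ s ++ v ++ t := ⟨s, (append_assoc s v t).symm⟩
  exact (hw.of_suffix h1).of_prefix ⟨t, rfl⟩

/-- In a rich word, the longest palindromic suffix does not occur earlier:
it is not a factor of the word minus its last letter. -/
lemma rich_concat_not_infix {v : List α} {a : α} {q : List α}
    (hq : q <:+ v ++ [a]) (hqp : Palindromic q)
    (hmax : ∀ p, p <:+ v ++ [a] → Palindromic p → p.length ≤ q.length)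
    (hr : Rich (v ++ [a])) : ¬ q <:+: v := by
  intro hmem
  have hmem' : q ∈ palSet v := ⟨hmem, hqp⟩
  have h1 : palSet (v ++ [a]) = palSet v := by
    rw [palSet_concat hq hqp hmax, Set.insert_eq_self.mpr hmem']
  have h2 : Rich v := hr.of_prefix ⟨[a], rfl⟩
  rw [rich_def] at hr h2
  rw [h1, h2] at hr
  simp at hr

/-- The set of occurrences of `u` in `r`, encoded by the preceding segment. -/
def occSet (u r : List α) : Set (List α) := {s : List α | ∃ t, r = s ++ u ++ t}

lemma occSet_finite (u r : List α) : (occSet u r).Finite := by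
  apply Set.Finite.subset r.inits.finite_toSet
  rintro s ⟨t, ht⟩
  simp only [Set.mem_setOf_eq, List.mem_inits]
  exact ⟨u ++ t, by rw [ht, append_assoc]⟩

lemma occSet_mem_prefix {u r s : List α} (h : s ∈ occSet u r) : s <+: r := by
  obtain ⟨t, ht⟩ := h
  exact ⟨u ++ t, by rw [ht, append_assoc]⟩

/-- Forward direction. -/
lemma forward_dir {w : List α} (hw : Rich w) :
    ∀ u r : List α, u ≠ [] → Palindromic u → u <:+: w →
      r <:+: w → CompleteReturn u r → Palindromic r := by
  intro u r hune hupal _ hrw ⟨hpre, hsuf, hcard⟩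
  have hrne : r ≠ [] := by
    rintro rfl
    exact hune (List.prefix_nil.mp hpre)
  obtain ⟨q, hq, hqp, hqne, hmax⟩ := exists_maxPalSuffix r hrne
  have hulen : u.length ≤ q.length := hmax u hsuf hupal
  have huq_suf : u <:+ q := suffix_of_suffix_length_le hsuf hq hulen
  have huq_pre : u <+: q := IsSuffix.prefix_of_pal hupal hqp huq_suf
  by_cases hql : q.length = r.length
  · have := hq.eq_of_length hql
    rwa [← this]
  exfalso
  have hqlt : q.length < r.length := lt_of_le_of_ne hq.length_le hql
  have hult : u.length < r.length := lt_of_le_of_lt hulen hqlt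
  have hq2 := hq
  obtain ⟨s, hs⟩ := hq2
  have hslen : s.length + q.length = r.length := by
    have := congrArg length hs; simpa using this
  rcases lt_or_eq_of_le hulen with hul | hul
  · -- three occurrences of u in r
    obtain ⟨t1, ht1⟩ := huq_pre
    obtain ⟨t0, ht0⟩ := hpre
    obtain ⟨s2, hs2⟩ := hsuf
    have hs2len : s2.length + u.length = r.length := by
      have := congrArg length hs2; simpa using this
    have m1 : ([] : List α) ∈ occSet u r := ⟨t0, by rw [← ht0]; simp⟩
    have m2 : s ∈ occSet u r := ⟨t1, by rw [← hs, ← ht1, append_assoc]⟩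
    have m3 : s2 ∈ occSet u r := ⟨[], by rw [← hs2]; simp⟩
    have hne1 : ([] : List α) ≠ s := by
      intro h
      have : s.length = 0 := by rw [← h]; rfl
      omega
    have hne2 : ([] : List α) ≠ s2 := by
      intro h
      have : s2.length = 0 := by rw [← h]; rfl
      omega
    have hne3 : s ≠ s2 := by
      intro h
      have : s.length = s2.length := by rw [h]
      omega
    have hsub : ({[], s, s2} : Set (List α)) ⊆ occSet u r := by
      rintro x (rfl | rfl | rfl) <;> assumption
    have h3 : ({[], s, s2} : Set (List α)).ncard = 3 := by
      rw [Set.ncard_insert_of_notMem (by simp [hne1, hne2])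
        ((Set.finite_singleton _).insert _), Set.ncard_pair hne3]
    have := Set.ncard_le_ncard hsub (occSet_finite u r)
    rw [h3] at this
    have hc : (occSet u r).ncard = 2 := hcard
    omega
  · -- u = q is the longest palindromic suffix, but it occurs earlier: contradiction
    have huq : u = q := huq_suf.eq_of_length hul
    obtain ⟨t0, ht0⟩ := hpre
    have ht0ne : t0 ≠ [] := by
      rintro rfl
      rw [append_nil] at ht0
      rw [ht0] at hult
      omega
    have hrich : Rich r := hw.of_infix hrw
    have hrl : r.dropLast ++ [r.getLast hrne] = r := List.dropLast_concat_getLast hrne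
    have hq' : q <:+ r.dropLast ++ [r.getLast hrne] := by rwa [hrl]
    have hmax' : ∀ p, p <:+ r.dropLast ++ [r.getLast hrne] → Palindromic p →
        p.length ≤ q.length := by
      intro p h1 h2
      exact hmax p (by rwa [hrl] at h1) h2
    have hr' : Rich (r.dropLast ++ [r.getLast hrne]) := by rwa [hrl]
    refine rich_concat_not_infix hq' hqp hmax' hr' ?_
    -- q = u is a factor of r.dropLast
    have : r.dropLast = u ++ t0.dropLast := by
      rw [← ht0, List.dropLast_append_of_ne_nil ht0ne]
    rw [← huq, this]
    exact ⟨[], t0.dropLast, by simp⟩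

/-- Converse direction. -/
lemma converse_dir : ∀ w : List α,
    (∀ u r : List α, u ≠ [] → Palindromic u → u <:+: w →
      r <:+: w → CompleteReturn u r → Palindromic r) → Rich w := by
  intro w
  induction w using List.reverseRecOn with
  | nil =>
    intro _
    rw [rich_def, palSet_nil]
    simp
  | append_singleton v a ih =>
    intro H
    have hva : v <:+: v ++ [a] := ⟨[], [a], by simp⟩
    have hv : Rich v := ih (fun u r h1 h2 h3 h4 h5 =>
      H u r h1 h2 (h3.trans hva) (h4.trans hva) h5)
    obtain ⟨q, hq, hqp, hqne, hmax⟩ := exists_maxPalSuffix (v ++ [a]) (by simp)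
    have hnot : ¬ q <:+: v := by
      intro hinf
      have hqlenv : q.length ≤ v.length := hinf.length_le
      -- the set of occurrences of q in v ++ [a] which are not the final one
      set W := v ++ [a] with hW
      set F : Set (List α) := {s | (∃ t, W = s ++ q ++ t) ∧ s.length + q.length < W.length}
        with hF
      have hFfin : F.Finite := (occSet_finite q W).subset (fun s hs => hs.1)
      have hFne : F.Nonempty := by
        obtain ⟨s0, t0, h0⟩ := hinf
        refine ⟨s0, ⟨t0 ++ [a], by rw [hW, ← h0]; simp⟩, ?_⟩
        have := congrArg length h0
        simp only [length_append] at this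
        simp only [hW, length_append, length_cons, length_nil]
        omega
      obtain ⟨s, ⟨⟨t, hst⟩, hslen⟩, hsmax⟩ := Set.exists_max_image F List.length hFfin hFne
      set r : List α := q ++ t with hr
      have hWr : W = s ++ r := by rw [hst, append_assoc]
      have hrsuf : r <:+ W := ⟨s, hWr.symm⟩
      have hWlen : s.length + r.length = W.length := by
        have := congrArg length hWr
        simp only [length_append] at this
        omega
      have hrlen : q.length < r.length := by omega
      have hqsufr : q <:+ r := suffix_of_suffix_length_le hq hrsuf hrlen.le
      obtain ⟨s2, hs2⟩ := hqsufr
      have hs2len : s2.length + q.length = r.length := by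
        have := congrArg length hs2; simpa using this
      have hocc : occSet q r = {[], s2} := by
        ext x
        constructor
        · rintro ⟨tx, htx⟩
          by_cases htxnil : tx = []
          · subst htxnil
            rw [append_nil] at htx
            right
            have hlx : x.length = s2.length := by
              have h1 := congrArg length htx
              simp only [length_append] at h1
              omega
            have : x ++ q = s2 ++ q := by rw [← htx, hs2]
            exact (append_inj' this rfl).1
          · left
            have hmem : (s ++ x) ∈ F := by
              refine ⟨⟨tx, by rw [hWr, htx, ← append_assoc, ← append_assoc]⟩, ?_⟩
              have h1 := congrArg length htx
              simp only [length_append] at h1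
              have htxlen : 0 < tx.length := List.length_pos_iff.mpr htxnil
              simp only [length_append]
              omega
            have := hsmax _ hmem
            simp only [length_append] at this
            have : x.length = 0 := by omega
            exact List.eq_nil_of_length_eq_zero this
        · rintro (rfl | rfl)
          · exact ⟨t, by simp [hr]⟩
          · exact ⟨[], by rw [← hs2]; simp⟩
      have hs2ne : ([] : List α) ≠ s2 := by
        intro h
        have : s2.length = 0 := by rw [← h]; rfl
        omega
      have hcard : (occSet q r).ncard = 2 := by
        rw [hocc]; exact Set.ncard_pair hs2ne
      have hpal : Palindromic r := by
        refine H q r hqne hqp hq.isInfix hrsuf.isInfix ⟨⟨t, rfl⟩, ⟨s2, hs2⟩, ?_⟩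
        exact hcard
      have := hmax r hrsuf hpal
      omega
    rw [rich_def, palSet_concat hq hqp hmax,
      Set.ncard_insert_of_notMem (fun h => hnot h.1) (palSet_finite v)]
    rw [rich_def] at hv
    rw [hv]
    simp

end Aux

theorem rich_iff_complete_returns_palindromic {α : Type*} (w : List α) :
    Rich w ↔ ∀ u r : List α, u ≠ [] → Palindromic u → u <:+: w →
      r <:+: w → CompleteReturn u r → Palindromic r := by
  exact ⟨forward_dir, converse_dir w⟩
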